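/- Let X be a real normed space, M : X → X* bounded linear, self-adjoint and positive semi-definite, (x^k)_{k≥0} ⊂ X with v^{k+1} := −M(x^{k+1} − x^k), and let 𝒢 be the Lagrangian gap of F : X → ℝ, proper G : X → ℝ ∪ {+∞} and skew-adjoint Ξ. Suppose (non-escape at x̄): x̄ ∈ X, δ > 0, γ ≥ 0, Λ̆ self-adjoint with 0 ≤ Λ̆ ≤ M, (ε_k) ⊂ ℝ with r := sup_N Σ_{k<N} ε_k < δ²/2, x^0 ∈ 𝔒_M(x̄, √(δ² − 2r)), and whenever x^0, …, x^k ∈ 𝔒_M(x̄, δ): ⟨v^{k+1}, x^{k+1} − x̄⟩ ≥ γ ‖x^{k+1} − x̄‖_M² − (1/2)‖x^{k+1} − x^k‖_{Λ̆}² − ε_k. Suppose further that x̂ ∈ X, γ̂ ≥ 0, Λ̂ self-adjoint with 0 ≤ Λ̂ ≤ M, and (ε̂_k) ⊂ ℝ are such that whenever x^0, …, x^k ∈ 𝔒_M(x̄, δ): ⟨v^{k+1}, x^{k+1} − x̂⟩ ≥ 𝒢(x^{k+1}; x̂) + (γ̂/2)‖x^{k+1} − x̂‖_M² − (1/2)‖x^{k+1}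 − x^k‖_{Λ̂}² − ε̂_k. Then for every N ≥ 1: Σ_{k=0}^{N−1} 𝒢(x^{k+1}; x̂) + (1/2)‖x^N − x̂‖_M² ≤ (1/2)‖x^0 − x̂‖_M² + Σ_{k=0}^{N−1} ε̂_k. -/

import Mathlib

lemma key_identity {X : Type*} [NormedAddCommGroup X] [NormedSpace ℝ X]
    (M : X →L[ℝ] StrongDual ℝ X) (hM : ∀ u v : X, M u v = M v u) (a b c : X) :
    (-(M (a - b))) (a - c)
      = 1/2 * M (b - c) (b - c) - 1/2 * M (a - c) (a - c) - 1/2 * M (a - b) (a - b) := by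
  simp only [map_sub, ContinuousLinearMap.sub_apply, ContinuousLinearMap.neg_apply]
  have h1 := hM a b
  have h2 := hM a c
  have h3 := hM b c
  ring_nf
  linarith

lemma ereal_shift (z : EReal) (c d : ℝ) (h : z + (c : EReal) ≤ (d : EReal)) :
    z ≤ ((d - c : ℝ) : EReal) := by
  induction z using EReal.rec with
  | bot => exact bot_le
  | coe t =>
    have h' : ((t + c : ℝ) : EReal) ≤ (d : EReal) := by push_cast; exact h
    have : t + c ≤ d := EReal.coe_le_coe_iff.mp h'
    exact EReal.coe_le_coe_iff.mpr (by linarith)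
  | top =>
    exfalso
    rw [EReal.top_add_coe] at h
    exact (EReal.coe_lt_top d).not_ge h

lemma ereal_coe_finset_sum (s : Finset ℕ) (f : ℕ → ℝ) :
    ((∑ k ∈ s, f k : ℝ) : EReal) = ∑ k ∈ s, ((f k : ℝ) : EReal) := by
  induction s using Finset.induction with
  | empty => simp
  | insert _ _ hnotmem ih =>
    rw [Finset.sum_insert hnotmem, Finset.sum_insert hnotmem, EReal.coe_add, ih]

theorem stmt16 {X : Type*} [NormedAddCommGroup X] [NormedSpace ℝ X]
    (M : X →L[ℝ] StrongDual ℝ X)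
    (hMsa : ∀ u v : X, M u v = M v u) (hMpsd : ∀ u : X, 0 ≤ M u u)
    (x : ℕ → X)
    (F : X → ℝ) (G : X → EReal)
    (hGproper : (∃ u, G u ≠ ⊤) ∧ ∀ u, G u ≠ ⊥)
    (Ξ : X →L[ℝ] StrongDual ℝ X)
    (hΞskew : ∀ u v : X, Ξ u v = -(Ξ v u))
    (gap : X → X → EReal)
    (hgap : ∀ u v : X,
      gap u v = ((F u : EReal) + G u) - ((F v : EReal) + G v) - ((Ξ u v : ℝ) : EReal))
    -- non-escape hypotheses at x̄
    (xb : X) (δ γ : ℝ) (hδ : 0 < δ) (hγ : 0 ≤ γ)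
    (Λb : X →L[ℝ] StrongDual ℝ X)
    (hΛbsa : ∀ u v : X, Λb u v = Λb v u)
    (hΛbpsd : ∀ u : X, 0 ≤ Λb u u)
    (hΛbM : ∀ u : X, Λb u u ≤ M u u)
    (ε : ℕ → ℝ) (r : ℝ)
    (hr : ∀ N : ℕ, ∑ k ∈ Finset.range N, ε k ≤ r)
    (hrδ : r < δ ^ 2 / 2)
    (hx0 : Real.sqrt (M (x 0 - xb) (x 0 - xb)) < Real.sqrt (δ ^ 2 - 2 * r))
    (hdesc : ∀ k : ℕ, (∀ n ≤ k, Real.sqrt (M (x n - xb) (x n - xb)) < δ) →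
      γ * M (x (k + 1) - xb) (x (k + 1) - xb)
          - (1 / 2) * Λb (x (k + 1) - x k) (x (k + 1) - x k) - ε k
        ≤ (-(M (x (k + 1) - x k))) (x (k + 1) - xb))
    -- gap inequality at x̂
    (xh : X) (γh : ℝ) (hγh : 0 ≤ γh)
    (Λh : X →L[ℝ] StrongDual ℝ X)
    (hΛhsa : ∀ u v : X, Λh u v = Λh v u)
    (hΛhpsd : ∀ u : X, 0 ≤ Λh u u)
    (hΛhM : ∀ u : X, Λh u u ≤ M u u)
    (εh : ℕ → ℝ)
    (hgapdesc : ∀ k : ℕ, (∀ n ≤ k, Real.sqrt (M (x n - xb) (x n - xb)) < δ) →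
      gap (x (k + 1)) xh
          + (((γh / 2) * M (x (k + 1) - xh) (x (k + 1) - xh)
              - (1 / 2) * Λh (x (k + 1) - x k) (x (k + 1) - x k) - εh k : ℝ) : EReal)
        ≤ (((-(M (x (k + 1) - x k))) (x (k + 1) - xh) : ℝ) : EReal)) :
    ∀ N : ℕ, 1 ≤ N →
      (∑ k ∈ Finset.range N, gap (x (k + 1)) xh)
          + (((1 / 2) * M (x N - xh) (x N - xh) : ℝ) : EReal)
        ≤ (((1 / 2) * M (x 0 - xh) (x 0 - xh) + ∑ k ∈ Finset.range N, εh k : ℝ) : EReal) := by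
  -- non-escape
  have hA : M (x 0 - xb) (x 0 - xb) < δ ^ 2 - 2 * r := by
    rwa [Real.sqrt_lt_sqrt_iff (hMpsd _)] at hx0
  have bound : ∀ n : ℕ, ∀ m ≤ n,
      M (x m - xb) (x m - xb)
        ≤ M (x 0 - xb) (x 0 - xb) + 2 * ∑ k ∈ Finset.range m, ε k := by
    intro n
    induction n with
    | zero =>
      intro m hm
      interval_cases m
      simp
    | succ n ih =>
      intro m hm
      rcases Nat.lt_succ_iff_lt_or_eq.mp (Nat.lt_succ_of_le hm) with h | h
      · exact ih m (Nat.lt_succ_iff.mp h)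
      · subst h
        have hball : ∀ p ≤ n, Real.sqrt (M (x p - xb) (x p - xb)) < δ := by
          intro p hp
          have h1 := ih p hp
          have h2 := hr p
          rw [Real.sqrt_lt' hδ]
          linarith
        have hd := hdesc n hball
        rw [key_identity M hMsa (x (n + 1)) (x n) xb] at hd
        have hΛ := hΛbM (x (n + 1) - x n)
        have hγn := mul_nonneg hγ (hMpsd (x (n + 1) - xb))
        have hin := ih n le_rfl
        rw [Finset.sum_range_succ]
        linarith
  have ball : ∀ n : ℕ, Real.sqrt (M (x n - xb) (x n - xb)) < δ := by
    intro n
    have h1 := bound n n le_rfl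
    have h2 := hr n
    rw [Real.sqrt_lt' hδ]
    linarith
  -- per-step gap bound
  set a : ℕ → ℝ := fun k =>
    1 / 2 * M (x k - xh) (x k - xh) - 1 / 2 * M (x (k + 1) - xh) (x (k + 1) - xh) + εh k
    with ha
  have hgk : ∀ k : ℕ, gap (x (k + 1)) xh ≤ ((a k : ℝ) : EReal) := by
    intro k
    have h := hgapdesc k (fun n _ => ball n)
    have h2 := ereal_shift _ _ _ h
    refine h2.trans (EReal.coe_le_coe_iff.mpr ?_)
    rw [key_identity M hMsa (x (k + 1)) (x k) xh]
    have hΛ := hΛhM (x (k + 1) - x k)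
    have hγn := mul_nonneg hγh (hMpsd (x (k + 1) - xh))
    simp only [ha]
    nlinarith
  intro N _
  have hsum : (∑ k ∈ Finset.range N, gap (x (k + 1)) xh)
      ≤ ((∑ k ∈ Finset.range N, a k : ℝ) : EReal) := by
    rw [ereal_coe_finset_sum]
    exact Finset.sum_le_sum fun k _ => hgk k
  have htel : ∑ k ∈ Finset.range N, a k
      = 1 / 2 * M (x 0 - xh) (x 0 - xh) - 1 / 2 * M (x N - xh) (x N - xh)
        + ∑ k ∈ Finset.range N, εh k := by
    simp only [ha]
    rw [Finset.sum_add_distrib, Finset.sum_range_sub'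
      (f := fun k => (1 / 2 * M (x k - xh) (x k - xh) : ℝ))]
  calc (∑ k ∈ Finset.range N, gap (x (k + 1)) xh)
        + (((1 / 2) * M (x N - xh) (x N - xh) : ℝ) : EReal)
      ≤ ((∑ k ∈ Finset.range N, a k : ℝ) : EReal)
        + (((1 / 2) * M (x N - xh) (x N - xh) : ℝ) : EReal) :=
        add_le_add_left hsum _
    _ = (((1 / 2) * M (x 0 - xh) (x 0 - xh) + ∑ k ∈ Finset.range N, εh k : ℝ) : EReal) := by
        rw [← EReal.coe_add, htel]
        congr 1
        ring
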